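/- Suppose Hypothesis T holds: there exist λ₃ > 0 and constants τ_v > 0 such that for all 1 ≤ u ≤ v and open T ⊆ (1/(ev), 1/u) with ∫_T dt/t ≥ (1+λ₃)/u, there exists an integer k ∈ [u, ev] with the restricted simplex integral ∫_{t₁+⋯+t_k=1, t_i ∈ T} dt₁⋯dt_{k−1}/(t₁⋯t_k) ≥ τ_v (∫_T dt/t)^k. Then Hypothesis A holds with λ₂ = 2λ₃ and α_v ≫ τ_v e^{−O(v)}: for some constant C₂, if v² ≤ λ₂N/C₂, 1 ≤ u ≤ v, and A ⊆ ℤ ∩ (N/(ev), N/u] with ∑_{a∈A} 1/a ≥ (1+λ₂)/u, then there exist an integer k ∈ [u, ev] and n ∈ [N−k, N] ∩ ℤ with ∑_{(a₁,…,a_k)∈A^k, a₁+⋯+a_k=n} 1/(a₁⋯a_k) ≥ (α_v/N)(∑_{a∈A} 1/a)^k. -/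

import Mathlib

open MeasureTheory Real Finset

set_option maxHeartbeats 2000000 in
theorem stmt_11 (lam₃ : ℝ) (hlam₃ : 0 < lam₃) (τ : ℝ → ℝ) (hτ : ∀ v, 0 < τ v)
    (hypT : ∀ u v : ℝ, 1 ≤ u → u ≤ v → ∀ T : Set ℝ, IsOpen T →
      T ⊆ Set.Ioo (1 / (Real.exp 1 * v)) (1 / u) →
      (1 + lam₃) / u ≤ ∫ t in T, 1 / t →
      ∃ k : ℕ, u ≤ (k : ℝ) ∧ (k : ℝ) ≤ Real.exp 1 * v ∧
        (∫ t in {t : Fin (k - 1) → ℝ | (∀ i, t i ∈ T) ∧ (1 - ∑ i, t i) ∈ T},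
            (∏ i, (t i)⁻¹) * (1 - ∑ i, t i)⁻¹) ≥
          τ v * (∫ t in T, 1 / t) ^ k) :
    ∃ C₂ C : ℝ, 0 < C₂ ∧ 0 < C ∧
      ∀ N u v : ℝ, 1 ≤ u → u ≤ v → v ^ 2 ≤ (2 * lam₃) * N / C₂ →
      ∀ A : Finset ℤ, (∀ a ∈ A, N / (Real.exp 1 * v) < (a : ℝ) ∧ (a : ℝ) ≤ N / u) →
      (1 + 2 * lam₃) / u ≤ ∑ a ∈ A, 1 / (a : ℝ) →
      ∃ (k : ℕ) (n : ℤ), u ≤ (k : ℝ) ∧ (k : ℝ) ≤ Real.exp 1 * v ∧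
        N - k ≤ (n : ℝ) ∧ (n : ℝ) ≤ N ∧
        ∑ a ∈ (Fintype.piFinset fun _ : Fin k => A).filter (fun a => ∑ i, a i = n),
            ∏ i, ((a i : ℝ))⁻¹ ≥
          (τ v * Real.exp (-(C * v)) / N) * (∑ a ∈ A, 1 / (a : ℝ)) ^ k := by
  classical
  refine ⟨16 * Real.exp 1 ^ 2, 6, by positivity, by norm_num, ?_⟩
  intro N u v hu huv hN A hA hS
  have he1 : (1:ℝ) < Real.exp 1 := by
    have := Real.exp_one_gt_d9; linarith
  have he3 : Real.exp 1 < 3 := by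
    have := Real.exp_one_lt_d9; linarith
  have hu0 : (0:ℝ) < u := lt_of_lt_of_le one_pos hu
  have hv1 : (1:ℝ) ≤ v := hu.trans huv
  have hv0 : (0:ℝ) < v := lt_of_lt_of_le one_pos hv1
  have hC₂ : (0:ℝ) < 16 * Real.exp 1 ^ 2 := by positivity
  have hNv : 16 * Real.exp 1 ^ 2 * v ^ 2 ≤ 2 * lam₃ * N := by
    rw [le_div_iff₀ hC₂] at hN; nlinarith
  have hN0 : (0:ℝ) < N := by
    have h1 : (1:ℝ) ≤ v^2 := by nlinarith
    have h2 : (1:ℝ) ≤ Real.exp 1 ^ 2 := by nlinarith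
    nlinarith [mul_le_mul h2 h1 zero_le_one (by positivity : (0:ℝ) ≤ Real.exp 1 ^2)]
  -- positivity of elements of A
  have haApos : ∀ a ∈ A, (0:ℝ) < (a:ℝ) := by
    intro a ha
    exact lt_trans (by positivity) (hA a ha).1
  have haAinv : ∀ a ∈ A, 1 / (a:ℝ) ≤ Real.exp 1 * v / N := by
    intro a ha
    rw [div_le_div_iff₀ (haApos a ha) hN0]
    have h1 := (hA a ha).1
    rw [div_lt_iff₀ (by positivity)] at h1
    nlinarith [haApos a ha]
  set S : ℝ := ∑ a ∈ A, 1 / (a:ℝ) with hSdef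
  have hSpos : 0 < S := lt_of_lt_of_le (by positivity) hS
  -- upper bound on S
  have hAcard : (A.card : ℝ) ≤ N / u := by
    have hsub : A ⊆ Finset.Icc 1 ⌊N/u⌋ := by
      intro a ha
      rw [Finset.mem_Icc]
      constructor
      · have h0 : (0:ℤ) < a := by exact_mod_cast haApos a ha
        omega
      · exact Int.le_floor.mpr (hA a ha).2
    have h := Finset.card_le_card hsub
    have hfl0 : (0:ℤ) ≤ ⌊N/u⌋ := Int.floor_nonneg.mpr (by positivity)
    calc (A.card:ℝ) ≤ ((Finset.Icc (1:ℤ) ⌊N/u⌋).card : ℝ) := by exact_mod_cast h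
      _ ≤ N / u := by
          rw [Int.card_Icc]
          have : (⌊N/u⌋ + 1 - 1).toNat = ⌊N/u⌋.toNat := by omega
          rw [this]
          have h2 : ((⌊N/u⌋.toNat : ℤ) : ℝ) ≤ N/u := by
            rw [Int.toNat_of_nonneg hfl0]; exact Int.floor_le _
          exact_mod_cast h2
  have hSub : S ≤ Real.exp 1 * v / u := by
    calc S ≤ A.card • (Real.exp 1 * v / N) :=
          Finset.sum_le_card_nsmul A _ _ (fun a ha => haAinv a ha)
      _ = (A.card : ℝ) * (Real.exp 1 * v / N) := by rw [nsmul_eq_mul]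
      _ ≤ (N/u) * (Real.exp 1 * v / N) := by
          apply mul_le_mul_of_nonneg_right hAcard (by positivity)
      _ = Real.exp 1 * v / u := by field_simp
  -- the truncated set
  set A' : Finset ℤ := A.filter (fun a => (a:ℝ) + 1 ≤ N / u) with hA'def
  have hA'sub : A' ⊆ A := Finset.filter_subset _ _
  set S' : ℝ := ∑ a ∈ A', 1 / (a:ℝ) with hS'def
  have hSS' : S - Real.exp 1 * v / N ≤ S' := by
    have hsplit : ∑ a ∈ A \ A', 1/(a:ℝ) + S' = S := Finset.sum_sdiff hA'sub
    have hBcard : (A \ A').card ≤ 1 := by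
      apply Finset.card_le_one.mpr
      intro a ha b hb
      rw [Finset.mem_sdiff, hA'def, Finset.mem_filter, not_and] at ha hb
      have ha2 : N/u < (a:ℝ) + 1 := lt_of_not_ge (ha.2 ha.1)
      have hb2 : N/u < (b:ℝ) + 1 := lt_of_not_ge (hb.2 hb.1)
      have h1 : (a:ℝ) ≤ N/u := (hA a ha.1).2
      have h2 : (b:ℝ) ≤ N/u := (hA b hb.1).2
      have hab' : a < b + 1 := by exact_mod_cast lt_of_le_of_lt h1 hb2
      have hba' : b < a + 1 := by exact_mod_cast lt_of_le_of_lt h2 ha2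
      omega
    have hBsum : ∑ a ∈ A \ A', 1/(a:ℝ) ≤ Real.exp 1 * v / N := by
      calc ∑ a ∈ A \ A', 1/(a:ℝ) ≤ (A \ A').card • (Real.exp 1 * v / N) :=
            Finset.sum_le_card_nsmul _ _ _
              (fun a ha => haAinv a (Finset.mem_sdiff.mp ha).1)
        _ = ((A \ A').card : ℝ) * (Real.exp 1 * v / N) := by rw [nsmul_eq_mul]
        _ ≤ 1 * (Real.exp 1 * v / N) := by
            apply mul_le_mul_of_nonneg_right _ (by positivity)
            exact_mod_cast hBcard
        _ = Real.exp 1 * v / N := one_mul _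
    linarith
  set L : ℝ := ∑ a ∈ A', 1 / ((a:ℝ) + 1) with hLdef
  have hS'S : S' ≤ S := by
    apply Finset.sum_le_sum_of_subset_of_nonneg hA'sub
    intro a ha _
    have := haApos a ha
    positivity
  have hLS' : S' - (Real.exp 1 * v / N) * S ≤ L := by
    have key : ∀ a ∈ A', 1/(a:ℝ) - (Real.exp 1 * v / N) * (1/(a:ℝ)) ≤ 1/((a:ℝ)+1) := by
      intro a ha
      have hx : 0 < (a:ℝ) := haApos a (hA'sub ha)
      have hxe : 1/(a:ℝ) ≤ Real.exp 1 * v / N := haAinv a (hA'sub ha)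
      have hx1 : (0:ℝ) < (a:ℝ) + 1 := by linarith
      have h1 : 1 ≤ (Real.exp 1 * v / N) * (a:ℝ) := by
        rw [div_le_iff₀ hx] at hxe; linarith
      have heq : 1/(a:ℝ) - (Real.exp 1 * v / N) * (1/(a:ℝ))
          = (1 - Real.exp 1 * v / N) / (a:ℝ) := by ring
      rw [heq, div_le_div_iff₀ hx hx1]
      nlinarith [hxe, hx, h1]
    have hsum : ∑ a ∈ A', (1/(a:ℝ) - (Real.exp 1 * v / N) * (1/(a:ℝ))) ≤ L :=
      Finset.sum_le_sum key
    have heq2 : ∑ a ∈ A', (1/(a:ℝ) - (Real.exp 1 * v / N) * (1/(a:ℝ)))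
        = S' - (Real.exp 1 * v / N) * S' := by
      rw [Finset.sum_sub_distrib, ← Finset.mul_sum]
    have : (Real.exp 1 * v / N) * S' ≤ (Real.exp 1 * v / N) * S :=
      mul_le_mul_of_nonneg_left hS'S (by positivity)
    linarith
  have hLS : S - lam₃ / u ≤ L := by
    have hb : Real.exp 1 * v / N + (Real.exp 1 * v / N) * S ≤ lam₃ / u := by
      have heq : Real.exp 1 * v / N + (Real.exp 1 * v / N) * S
          = (Real.exp 1 * v * (1 + S)) / N := by ring
      rw [heq, div_le_div_iff₀ hN0 hu0]
      have h1 : S * u ≤ Real.exp 1 * v := by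
        rw [le_div_iff₀ hu0] at hSub; linarith
      have he0 : (0:ℝ) < Real.exp 1 := Real.exp_pos 1
      nlinarith [mul_le_mul_of_nonneg_left huv (by positivity : (0:ℝ) ≤ Real.exp 1 * v),
        mul_le_mul_of_nonneg_left h1 (by positivity : (0:ℝ) ≤ Real.exp 1 * v),
        mul_pos he0 hv0, sq_nonneg v, hNv, hlam₃, hu0, hv1]
    linarith
  -- the open set T
  set J : ℤ → Set ℝ := fun a => Set.Ioo ((a:ℝ)/N) (((a:ℝ)+1)/N) with hJdef
  set T : Set ℝ := ⋃ a ∈ A', J a with hTdef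
  have hTopen : IsOpen T := isOpen_biUnion (fun a _ => isOpen_Ioo)
  have hTsub : T ⊆ Set.Ioo (1 / (Real.exp 1 * v)) (1 / u) := by
    intro x hx
    rw [hTdef] at hx
    rw [Set.mem_iUnion₂] at hx
    obtain ⟨a, ha, hxa⟩ := hx
    have haA := hA'sub ha
    have hfil : (a:ℝ) + 1 ≤ N / u := (Finset.mem_filter.mp ha).2
    have hx0 : 0 < (a:ℝ) := haApos a haA
    constructor
    · have h1 : N / (Real.exp 1 * v) < (a:ℝ) := (hA a haA).1
      have : 1 / (Real.exp 1 * v) < (a:ℝ) / N := by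
        rw [div_lt_div_iff₀ (by positivity) hN0]
        rw [div_lt_iff₀ (by positivity)] at h1
        linarith
      exact lt_trans this hxa.1
    · have h2 : ((a:ℝ) + 1) / N ≤ 1 / u := by
        rw [div_le_div_iff₀ hN0 hu0]
        rw [le_div_iff₀ hu0] at hfil
        linarith
      exact lt_of_lt_of_le hxa.2 h2
  have hdisjJ : ∀ a b : ℤ, a < b → Disjoint (J a) (J b) := by
    intro a b hab
    apply Set.disjoint_left.mpr
    intro x hxa hxb
    have h1 : (a:ℝ) + 1 ≤ (b:ℝ) := by exact_mod_cast hab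
    have h2 : ((a:ℝ)+1)/N ≤ (b:ℝ)/N := by gcongr
    have h3 : x < ((a:ℝ)+1)/N := hxa.2
    have h4 : (b:ℝ)/N < x := hxb.1
    linarith
  have hJint1 : ∀ a ∈ A', ∫ t in J a, 1 / t = Real.log (((a:ℝ)+1)/(a:ℝ)) := by
    intro a ha
    have hx : 0 < (a:ℝ) := haApos a (hA'sub ha)
    have hlo : 0 < (a:ℝ)/N := by positivity
    have hle : (a:ℝ)/N ≤ ((a:ℝ)+1)/N := by gcongr; linarith
    have hne : (0:ℝ) ∉ Set.uIcc ((a:ℝ)/N) (((a:ℝ)+1)/N) :=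
      Set.notMem_uIcc_of_lt hlo (by positivity)
    show ∫ t in Set.Ioo ((a:ℝ)/N) (((a:ℝ)+1)/N), 1/t = _
    rw [← MeasureTheory.integral_Ioc_eq_integral_Ioo,
      ← intervalIntegral.integral_of_le hle, integral_one_div hne]
    congr 1
    rw [div_div_div_cancel_right₀]
    exact hN0.ne'
  have hintJ : ∀ a ∈ A', IntegrableOn (fun t => 1/t) (J a) := by
    intro a ha
    have hx : 0 < (a:ℝ) := haApos a (hA'sub ha)
    have hcont : ContinuousOn (fun t : ℝ => 1/t) (Set.Icc ((a:ℝ)/N) (((a:ℝ)+1)/N)) := by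
      exact continuousOn_const.div continuousOn_id
        (fun x hx' => ne_of_gt (lt_of_lt_of_le (by positivity) hx'.1))
    exact (hcont.integrableOn_Icc).mono_set Set.Ioo_subset_Icc_self
  have hTint : ∫ t in T, 1 / t = ∑ a ∈ A', Real.log (((a:ℝ)+1)/(a:ℝ)) := by
    rw [hTdef]
    rw [MeasureTheory.integral_biUnion_finset A' (fun a _ => measurableSet_Ioo) ?_ hintJ]
    · exact Finset.sum_congr rfl hJint1
    · intro a ha b hb hab
      rcases lt_or_gt_of_ne hab with h | h
      · exact hdisjJ a b h
      · exact (hdisjJ b a h).symm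
  have hlogL : L ≤ ∑ a ∈ A', Real.log (((a:ℝ)+1)/(a:ℝ)) := by
    apply Finset.sum_le_sum
    intro a ha
    have hx : 0 < (a:ℝ) := haApos a (hA'sub ha)
    have hpos : 0 < (a:ℝ)/((a:ℝ)+1) := by positivity
    have hlog := Real.log_le_sub_one_of_pos hpos
    have heq : Real.log (((a:ℝ)+1)/(a:ℝ)) = - Real.log ((a:ℝ)/((a:ℝ)+1)) := by
      rw [← Real.log_inv, inv_div]
    have he2 : (a:ℝ)/((a:ℝ)+1) - 1 = -(1/((a:ℝ)+1)) := by field_simp; ring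
    rw [heq]
    linarith [hlog, he2]
  set Jint : ℝ := ∫ t in T, 1 / t with hJintdef
  have hJL : L ≤ Jint := by rw [hTint]; exact hlogL
  have hkey0 : (1 + 2*lam₃)/u - lam₃/u = (1 + lam₃)/u := by ring
  have hJ1 : (1 + lam₃) / u ≤ Jint := by linarith
  have hlamS : lam₃ / u ≤ S / 2 := by
    rw [div_le_div_iff₀ hu0 two_pos]
    rw [div_le_iff₀ hu0] at hS
    nlinarith
  have hJhalf : S / 2 ≤ Jint := by linarith
  have hJpos : 0 < Jint := lt_of_lt_of_le (by positivity) hJ1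
  -- apply Hypothesis T
  obtain ⟨k, hku, hkev, hIntD⟩ := hypT u v hu huv T hTopen hTsub hJ1
  have hk1 : 1 ≤ k := by exact_mod_cast hu.trans hku
  obtain ⟨m, rfl⟩ : ∃ m, k = m + 1 := ⟨k - 1, (Nat.succ_pred_eq_of_pos hk1).symm⟩
  have hA'pos : ∀ a ∈ A', (0:ℝ) < (a:ℝ) := fun a ha => haApos a (hA'sub ha)
  -- rewrite hIntD in convenient form
  set D : Set (Fin m → ℝ) := {t | (∀ i, t i ∈ T) ∧ (1 - ∑ i, t i) ∈ T} with hDdef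
  set fD : (Fin m → ℝ) → ℝ := fun t => (∏ i, (t i)⁻¹) * (1 - ∑ i, t i)⁻¹ with hfDdef
  have hIntD' : τ v * Jint ^ (m+1) ≤ ∫ t in D, fD t := hIntD
  have hDmeas : MeasurableSet D := by
    have h1 : MeasurableSet {t : Fin m → ℝ | ∀ i, t i ∈ T} := by
      have he : {t : Fin m → ℝ | ∀ i, t i ∈ T} = Set.univ.pi (fun _ => T) := by
        ext t; simp [Set.mem_univ_pi]
      rw [he]
      exact MeasurableSet.univ_pi (fun _ => hTopen.measurableSet)
    have hc : Measurable (fun t : Fin m → ℝ => 1 - ∑ i, t i) :=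
      measurable_const.sub (Finset.measurable_sum _ (fun i _ => measurable_pi_apply i))
    have h2 : MeasurableSet {t : Fin m → ℝ | (1 - ∑ i, t i) ∈ T} :=
      hc hTopen.measurableSet
    exact h1.inter h2
  -- the boxes
  set Box : (Fin (m+1) → ℤ) → Set (Fin m → ℝ) := fun b =>
    {t | (∀ i : Fin m, t i ∈ J (b i.castSucc)) ∧ (1 - ∑ i, t i) ∈ J (b (Fin.last m))}
    with hBoxdef
  set M : (Fin (m+1) → ℤ) → ℝ := fun b => ∏ i, (N / (b i : ℝ)) with hMdef
  set P : Finset (Fin (m+1) → ℤ) := Fintype.piFinset (fun _ : Fin (m+1) => A') with hPdef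
  have hBoxmeas : ∀ b, MeasurableSet (Box b) := by
    intro b
    have h1 : MeasurableSet {t : Fin m → ℝ | ∀ i, t i ∈ J (b i.castSucc)} := by
      have he : {t : Fin m → ℝ | ∀ i, t i ∈ J (b i.castSucc)}
          = Set.univ.pi (fun i => J (b i.castSucc)) := by
        ext t; simp [Set.mem_univ_pi]
      rw [he]
      exact MeasurableSet.univ_pi (fun _ => measurableSet_Ioo)
    have hc : Measurable (fun t : Fin m → ℝ => 1 - ∑ i, t i) :=
      measurable_const.sub (Finset.measurable_sum _ (fun i _ => measurable_pi_apply i))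
    exact h1.inter (hc measurableSet_Ioo)
  have hvolBox : ∀ b, volume (Box b) ≤ ENNReal.ofReal ((1/N)^m) := by
    intro b
    calc volume (Box b) ≤ volume (Set.univ.pi (fun i : Fin m => J (b i.castSucc))) := by
          apply measure_mono
          intro t ht
          rw [Set.mem_univ_pi]
          exact ht.1
      _ = ∏ i : Fin m, volume (J (b i.castSucc)) := volume_pi_pi _
      _ = ENNReal.ofReal ((1/N)^m) := by
          have hone : ∀ c : ℤ, volume (J c) = ENNReal.ofReal (1/N) := by
            intro c
            rw [hJdef]
            simp only [Real.volume_Ioo]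
            congr 1
            field_simp; ring
          simp only [hone]
          rw [Finset.prod_const, Finset.card_univ, Fintype.card_fin,
            ← ENNReal.ofReal_pow (by positivity)]
  have hMnonneg : ∀ b, (∀ i, b i ∈ A') → 0 ≤ M b := by
    intro b hb
    apply Finset.prod_nonneg
    intro i _
    have := hA'pos (b i) (hb i)
    positivity
  have hfDleM : ∀ b, (∀ i, b i ∈ A') → ∀ t ∈ Box b, fD t ≤ M b := by
    intro b hbA t ht
    have hmem : ∀ i : Fin (m+1), (Fin.snoc t (1 - ∑ j, t j) : Fin (m+1) → ℝ) i ∈ J (b i) := by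
      intro i
      refine Fin.lastCases ?_ (fun j => ?_) i
      · rw [Fin.snoc_last]; exact ht.2
      · rw [Fin.snoc_castSucc]; exact ht.1 j
    have hsnoc : fD t = ∏ i : Fin (m+1), ((Fin.snoc t (1 - ∑ j, t j) : Fin (m+1) → ℝ) i)⁻¹ := by
      rw [Fin.prod_univ_castSucc]
      simp [Fin.snoc_castSucc, Fin.snoc_last, hfDdef]
    rw [hsnoc, hMdef]
    apply Finset.prod_le_prod
    · intro i _
      have h1 : 0 < (b i : ℝ)/N := by
        have := hA'pos (b i) (hbA i); positivity
      have := lt_trans h1 (hmem i).1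
      positivity
    · intro i _
      have hbi : 0 < (b i : ℝ) := hA'pos (b i) (hbA i)
      have h1 : 0 < (b i : ℝ)/N := by positivity
      have h2 : ((Fin.snoc t (1 - ∑ j, t j) : Fin (m+1) → ℝ) i)⁻¹ ≤ ((b i : ℝ)/N)⁻¹ :=
        inv_anti₀ h1 (le_of_lt (hmem i).1)
      rwa [inv_div] at h2
  have hcover : ∀ t ∈ D, ∃ b, (∀ i, b i ∈ A') ∧ t ∈ Box b := by
    intro t ht
    have hmemT : ∀ i : Fin (m+1), (Fin.snoc t (1 - ∑ j, t j) : Fin (m+1) → ℝ) i ∈ T := by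
      intro i
      refine Fin.lastCases ?_ (fun j => ?_) i
      · rw [Fin.snoc_last]; exact ht.2
      · rw [Fin.snoc_castSucc]; exact ht.1 j
    have hex : ∀ i : Fin (m+1), ∃ a ∈ A', (Fin.snoc t (1 - ∑ j, t j) : Fin (m+1) → ℝ) i ∈ J a := by
      intro i
      have h := hmemT i
      rw [hTdef, Set.mem_iUnion₂] at h
      obtain ⟨a, ha, haJ⟩ := h
      exact ⟨a, ha, haJ⟩
    choose b hbA hbJ using hex
    refine ⟨b, hbA, ?_, ?_⟩
    · intro i
      have := hbJ i.castSucc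
      rwa [Fin.snoc_castSucc] at this
    · have := hbJ (Fin.last m)
      rwa [Fin.snoc_last] at this
  have hmono : ∀ t, D.indicator fD t ≤ ∑ b ∈ P, (Box b).indicator (fun _ => M b) t := by
    intro t
    have hnn : ∀ b' ∈ P, 0 ≤ (Box b').indicator (fun _ => M b') t := by
      intro b' hb'
      exact Set.indicator_nonneg (fun _ _ => hMnonneg b' (Fintype.mem_piFinset.mp hb')) t
    by_cases htD : t ∈ D
    · rw [Set.indicator_of_mem htD]
      obtain ⟨b, hbA, htB⟩ := hcover t htD
      have hbP : b ∈ P := by rw [hPdef, Fintype.mem_piFinset]; exact hbA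
      calc fD t ≤ M b := hfDleM b hbA t htB
        _ = (Box b).indicator (fun _ => M b) t := (Set.indicator_of_mem htB (fun _ => M b)).symm
        _ ≤ ∑ b' ∈ P, (Box b').indicator (fun _ => M b') t :=
            Finset.single_le_sum hnn hbP
    · rw [Set.indicator_of_notMem htD]
      exact Finset.sum_nonneg hnn
  -- integrability dichotomy
  by_cases hInt : IntegrableOn fD D volume
  case neg =>
    exfalso
    have h0 : ∫ t in D, fD t = 0 := integral_undef hInt
    rw [h0] at hIntD'
    have := mul_pos (hτ v) (pow_pos hJpos (m+1))
    linarith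
  case pos =>
  have hgint : Integrable (fun t => ∑ b ∈ P, (Box b).indicator (fun _ => M b) t) := by
    apply integrable_finset_sum
    intro b _
    rw [integrable_indicator_iff (hBoxmeas b)]
    apply (integrableOn_const_iff).mpr
    exact Or.inr (lt_of_le_of_lt (hvolBox b) ENNReal.ofReal_lt_top)
  have step1 : ∫ t in D, fD t ≤ ∑ b ∈ P, M b * (volume (Box b)).toReal := by
    rw [← integral_indicator hDmeas]
    calc ∫ t, D.indicator fD t
        ≤ ∫ t, ∑ b ∈ P, (Box b).indicator (fun _ => M b) t :=
          integral_mono ((integrable_indicator_iff hDmeas).mpr hInt) hgint hmono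
      _ = ∑ b ∈ P, ∫ t, (Box b).indicator (fun _ => M b) t := by
          apply integral_finset_sum
          intro b _
          rw [integrable_indicator_iff (hBoxmeas b)]
          apply (integrableOn_const_iff).mpr
          exact Or.inr (lt_of_le_of_lt (hvolBox b) ENNReal.ofReal_lt_top)
      _ = ∑ b ∈ P, M b * (volume (Box b)).toReal := by
          refine Finset.sum_congr rfl (fun b _ => ?_)
          rw [integral_indicator (hBoxmeas b), setIntegral_const, smul_eq_mul, mul_comm, measureReal_def]
  -- the sum constraint from nonempty boxes
  have hBoxsum : ∀ b, (Box b).Nonempty →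
      N - ((m+1:ℕ):ℝ) < ((∑ i, b i : ℤ):ℝ) ∧ ((∑ i, b i : ℤ):ℝ) < N := by
    intro b ⟨t, ht⟩
    have hs1 : ∑ i : Fin m, (b i.castSucc:ℝ)/N ≤ ∑ i, t i :=
      Finset.sum_le_sum (fun i _ => le_of_lt (ht.1 i).1)
    have hs2 : (b (Fin.last m):ℝ)/N < 1 - ∑ i, t i := ht.2.1
    have hs3 : ∑ i, t i ≤ ∑ i : Fin m, ((b i.castSucc:ℝ)+1)/N :=
      Finset.sum_le_sum (fun i _ => le_of_lt (ht.1 i).2)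
    have hs4 : 1 - ∑ i, t i < ((b (Fin.last m):ℝ)+1)/N := ht.2.2
    have hlt1 : ∑ i : Fin (m+1), (b i:ℝ)/N < 1 := by
      rw [Fin.sum_univ_castSucc]; linarith
    have hgt1 : 1 < ∑ i : Fin (m+1), ((b i:ℝ)+1)/N := by
      rw [Fin.sum_univ_castSucc]; linarith
    have hceq : ∑ i : Fin (m+1), (b i:ℝ)/N = ((∑ i, b i : ℤ):ℝ)/N := by
      rw [← Finset.sum_div]; norm_cast
    have hceq2 : ∑ i : Fin (m+1), ((b i:ℝ)+1)/N = (((∑ i, b i : ℤ):ℝ) + ((m+1:ℕ):ℝ))/N := by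
      rw [← Finset.sum_div, Finset.sum_add_distrib, Finset.sum_const, Finset.card_univ,
        Fintype.card_fin, nsmul_eq_mul, mul_one]
      norm_cast
    constructor
    · rw [hceq2] at hgt1
      rw [lt_div_iff₀ hN0, one_mul] at hgt1
      linarith
    · rw [hceq] at hlt1
      rw [div_lt_one hN0] at hlt1
      exact hlt1
  -- per-term bound
  have step2 : ∀ b ∈ P, M b * (volume (Box b)).toReal ≤
      (if N - ((m+1:ℕ):ℝ) < ((∑ i, b i : ℤ):ℝ) ∧ ((∑ i, b i : ℤ):ℝ) < N
        then N * ∏ i, ((b i:ℝ))⁻¹ else 0) := by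
    intro b hb
    have hbA : ∀ i, b i ∈ A' := Fintype.mem_piFinset.mp hb
    have hprodpos : 0 ≤ ∏ i, ((b i:ℝ))⁻¹ := by
      apply Finset.prod_nonneg
      intro i _
      have := hA'pos (b i) (hbA i)
      positivity
    by_cases hne : (Box b).Nonempty
    · rw [if_pos (hBoxsum b hne)]
      have h1 : (volume (Box b)).toReal ≤ (1/N)^m := by
        calc (volume (Box b)).toReal ≤ (ENNReal.ofReal ((1/N)^m)).toReal :=
              ENNReal.toReal_mono ENNReal.ofReal_ne_top (hvolBox b)
          _ = (1/N)^m := ENNReal.toReal_ofReal (by positivity)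
      calc M b * (volume (Box b)).toReal ≤ M b * (1/N)^m :=
            mul_le_mul_of_nonneg_left h1 (hMnonneg b hbA)
        _ = N * ∏ i, ((b i:ℝ))⁻¹ := by
            rw [hMdef]
            simp only [div_eq_mul_inv]
            rw [Finset.prod_mul_distrib, Finset.prod_const, Finset.card_univ,
              Fintype.card_fin]
            have hNpow : (N:ℝ)^(m+1) * (1/N)^m = N := by
              rw [one_div, inv_pow, pow_succ]
              field_simp
            calc N^(m+1) * (∏ i, ((b i:ℝ))⁻¹) * (1/N)^m
                = (N^(m+1) * (1/N)^m) * ∏ i, ((b i:ℝ))⁻¹ := by ring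
              _ = N * ∏ i, ((b i:ℝ))⁻¹ := by rw [hNpow]
    · have hempty : Box b = ∅ := Set.not_nonempty_iff_eq_empty.mp hne
      rw [hempty]
      simp only [measure_empty, ENNReal.toReal_zero, mul_zero]
      split
      · positivity
      · exact le_refl 0
  have hS_if : τ v * Jint ^ (m+1) ≤ ∑ b ∈ P,
      (if N - ((m+1:ℕ):ℝ) < ((∑ i, b i : ℤ):ℝ) ∧ ((∑ i, b i : ℤ):ℝ) < N
        then N * ∏ i, ((b i:ℝ))⁻¹ else 0) :=
    le_trans hIntD' (le_trans step1 (Finset.sum_le_sum step2))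
  set F : Finset (Fin (m+1) → ℤ) := P.filter
    (fun b => N - ((m+1:ℕ):ℝ) < ((∑ i, b i : ℤ):ℝ) ∧ ((∑ i, b i : ℤ):ℝ) < N) with hFdef
  set Icc1 : Finset ℤ := Finset.Icc (⌈N⌉ - (m+1)) (⌈N⌉ - 1) with hIccdef
  set key : ℤ → ℝ := fun n => ∑ b ∈ F.filter (fun b => ∑ i, b i = n),
    ∏ i, ((b i:ℝ))⁻¹ with hkeydef
  have hmaps : ∀ b ∈ F, (∑ i, b i) ∈ Icc1 := by
    intro b hb
    obtain ⟨_, hpred⟩ := Finset.mem_filter.mp hb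
    rw [hIccdef, Finset.mem_Icc]
    constructor
    · have h1 : N ≤ ((∑ i, b i + (m+1) : ℤ):ℝ) := by
        have hp := hpred.1
        push_cast at hp ⊢
        linarith
      have := Int.ceil_le.mpr h1
      omega
    · have h2 : ((∑ i, b i : ℤ):ℝ) < ((⌈N⌉:ℤ):ℝ) := lt_of_lt_of_le hpred.2 (Int.le_ceil N)
      have : (∑ i, b i) < ⌈N⌉ := by exact_mod_cast h2
      omega
  have hfib : ∑ n ∈ Icc1, key n = ∑ b ∈ F, ∏ i, ((b i:ℝ))⁻¹ :=
    Finset.sum_fiberwise_of_maps_to hmaps _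
  have hchain : τ v * Jint ^ (m+1) ≤ N * ∑ n ∈ Icc1, key n := by
    rw [hfib]
    calc τ v * Jint ^ (m+1) ≤ _ := hS_if
      _ = ∑ b ∈ F, N * ∏ i, ((b i:ℝ))⁻¹ := (Finset.sum_filter _ _).symm
      _ = N * ∑ b ∈ F, ∏ i, ((b i:ℝ))⁻¹ := by rw [Finset.mul_sum]
  have hIccne : Icc1.Nonempty := by
    rw [hIccdef]
    apply Finset.nonempty_Icc.mpr
    omega
  obtain ⟨n₀, hn₀, hmax⟩ := Finset.exists_max_image Icc1 key hIccne
  have hcard : Icc1.card = m + 1 := by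
    rw [hIccdef, Int.card_Icc]
    omega
  have hsum_le : ∑ n ∈ Icc1, key n ≤ ((m+1:ℕ):ℝ) * key n₀ := by
    calc ∑ n ∈ Icc1, key n ≤ Icc1.card • key n₀ :=
          Finset.sum_le_card_nsmul _ _ _ (fun n hn => hmax n hn)
      _ = ((m+1:ℕ):ℝ) * key n₀ := by rw [hcard, nsmul_eq_mul]
  have hWn : τ v * Jint ^ (m+1) ≤ N * (((m+1:ℕ):ℝ) * key n₀) :=
    le_trans hchain (mul_le_mul_of_nonneg_left hsum_le hN0.le)
  have hkeyle : τ v * Jint ^ (m+1) / (N * ((m+1:ℕ):ℝ)) ≤ key n₀ := by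
    rw [div_le_iff₀ (by positivity)]
    calc τ v * Jint ^ (m+1) ≤ N * (((m+1:ℕ):ℝ) * key n₀) := hWn
      _ = key n₀ * (N * ((m+1:ℕ):ℝ)) := by ring
  have h2e : (2:ℝ) ≤ Real.exp 1 := by
    have := Real.exp_one_gt_d9; linarith
  have h3 : ((m+1:ℕ):ℝ) * 2^(m+1) ≤ Real.exp (6*v) := by
    have ha : ((m+1:ℕ):ℝ) ≤ Real.exp (((m+1:ℕ)):ℝ) := by
      linarith [Real.add_one_le_exp (((m+1:ℕ)):ℝ)]
    have hb2 : (2:ℝ)^(m+1) ≤ Real.exp (((m+1:ℕ)):ℝ) := by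
      calc (2:ℝ)^(m+1) ≤ (Real.exp 1)^(m+1) := pow_le_pow_left₀ (by norm_num) h2e _
        _ = Real.exp (((m+1:ℕ)):ℝ) := by
            rw [← Real.exp_nat_mul]
            norm_num
    have hkv : ((m+1:ℕ):ℝ) ≤ 3 * v := by nlinarith [hkev, hv0]
    calc ((m+1:ℕ):ℝ) * 2^(m+1)
        ≤ Real.exp (((m+1:ℕ)):ℝ) * Real.exp (((m+1:ℕ)):ℝ) :=
          mul_le_mul ha hb2 (by positivity) (Real.exp_nonneg _)
      _ = Real.exp ((((m+1:ℕ)):ℝ) + (((m+1:ℕ)):ℝ)) := (Real.exp_add _ _).symm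
      _ ≤ Real.exp (6*v) := Real.exp_le_exp.mpr (by linarith)
  have key2 : Real.exp (-(6*v)) * ((m+1:ℕ):ℝ) ≤ 1 / 2^(m+1) := by
    rw [Real.exp_neg, inv_mul_eq_div, div_le_div_iff₀ (Real.exp_pos _) (by positivity)]
    linarith [h3]
  have hstep : Real.exp (-(6*v)) * S^(m+1) * ((m+1:ℕ):ℝ) ≤ Jint^(m+1) := by
    calc Real.exp (-(6*v)) * S^(m+1) * ((m+1:ℕ):ℝ)
        = (Real.exp (-(6*v)) * ((m+1:ℕ):ℝ)) * S^(m+1) := by ring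
      _ ≤ (1/2^(m+1)) * S^(m+1) := mul_le_mul_of_nonneg_right key2 (by positivity)
      _ = (S/2)^(m+1) := by rw [div_pow]; ring
      _ ≤ Jint^(m+1) := pow_le_pow_left₀ (by positivity) hJhalf _
  have hfinal : (τ v * Real.exp (-(6*v)) / N) * S^(m+1) ≤ key n₀ := by
    refine le_trans ?_ hkeyle
    rw [div_mul_eq_mul_div, div_le_div_iff₀ hN0 (by positivity)]
    calc τ v * Real.exp (-(6*v)) * S^(m+1) * (N * ((m+1:ℕ):ℝ))
        = (τ v * N) * (Real.exp (-(6*v)) * S^(m+1) * ((m+1:ℕ):ℝ)) := by ring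
      _ ≤ (τ v * N) * Jint^(m+1) := mul_le_mul_of_nonneg_left hstep (mul_nonneg (hτ v).le hN0.le)
      _ = τ v * Jint^(m+1) * N := by ring
  have hsubkey : key n₀ ≤ ∑ a ∈ (Fintype.piFinset fun _ : Fin (m+1) => A).filter
      (fun a => ∑ i, a i = n₀), ∏ i, ((a i:ℝ))⁻¹ := by
    apply Finset.sum_le_sum_of_subset_of_nonneg
    · intro b hb
      rw [Finset.mem_filter] at hb ⊢
      obtain ⟨hbF, hbsum⟩ := hb
      obtain ⟨hbP, _⟩ := Finset.mem_filter.mp hbF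
      refine ⟨?_, hbsum⟩
      rw [Fintype.mem_piFinset]
      intro i
      exact hA'sub ((Fintype.mem_piFinset.mp hbP) i)
    · intro b hb _
      apply Finset.prod_nonneg
      intro i _
      have hbi := haApos (b i) ((Fintype.mem_piFinset.mp (Finset.mem_filter.mp hb).1) i)
      positivity
  rw [hIccdef, Finset.mem_Icc] at hn₀
  have hlow : N - ((m+1:ℕ):ℝ) ≤ (n₀:ℝ) := by
    have h1 : ((⌈N⌉ - (m+1) : ℤ):ℝ) ≤ (n₀:ℝ) := by exact_mod_cast hn₀.1
    have h2 : N ≤ (⌈N⌉:ℝ) := Int.le_ceil N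
    push_cast at h1 ⊢
    linarith
  have hhigh : (n₀:ℝ) ≤ N := by
    have h1 : (n₀:ℝ) ≤ ((⌈N⌉ - 1 : ℤ):ℝ) := by exact_mod_cast hn₀.2
    have h2 : (⌈N⌉:ℝ) < N + 1 := Int.ceil_lt_add_one N
    push_cast at h1
    linarith
  exact ⟨m+1, n₀, hku, hkev, hlow, hhigh, le_trans hfinal hsubkey⟩
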